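/- Define functions p_xy, p_xx : ℕ × ℕ → ℚ by: p_xy(3, ℓ) = 1/3 and p_xx(3, ℓ) = 1/3 for ℓ = 0, 1, 2; p_xy(k, 0) = (1/C(k+1,2)) + (C(k-1,2)/C(k+1,2)) * p_xy(k-1, 0) and p_xx(k, 0) = p_xy(k, 0) for k ≥ 4; p_xx(k, ℓ) = (1/C(k,2)) + (C(k-2,2)/C(k,2)) * p_xx(k-1, ℓ-1) for k ≥ 4, k > ℓ ≥ 1; p_xy(k, ℓ) = (C(k-1,2)/C(k,2)) * p_xy(k-1, ℓ-1) for k ≥ 4, k > ℓ ≥ 1, where C(n,2) = n*(n-1)/2. Then for all k ≥ 4 and 0 ≤ ℓ < k, p_xy(k, ℓ) < 1/k. -/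

import Mathlib

/-- `C2 n = C(n,2) = n(n-1)/2` as a rational number. -/
def C2 (n : ℕ) : ℚ := (n : ℚ) * ((n : ℚ) - 1) / 2

theorem stmt8 (p_xy p_xx : ℕ → ℕ → ℚ)
    (h3 : ∀ ℓ, ℓ ≤ 2 → p_xy 3 ℓ = 1/3 ∧ p_xx 3 ℓ = 1/3)
    (h0 : ∀ k, 4 ≤ k →
      p_xy k 0 = 1 / C2 (k+1) + (C2 (k-1) / C2 (k+1)) * p_xy (k-1) 0 ∧
      p_xx k 0 = p_xy k 0)
    (hxx : ∀ k ℓ, 4 ≤ k → 1 ≤ ℓ → ℓ < k →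
      p_xx k ℓ = 1 / C2 k + (C2 (k-2) / C2 k) * p_xx (k-1) (ℓ-1))
    (hxy : ∀ k ℓ, 4 ≤ k → 1 ≤ ℓ → ℓ < k →
      p_xy k ℓ = (C2 (k-1) / C2 k) * p_xy (k-1) (ℓ-1)) :
    ∀ k ℓ, 4 ≤ k → ℓ < k → p_xy k ℓ < 1 / (k : ℚ) := by
  -- Key algebraic identities.
  have e0 : ∀ m : ℕ, (3:ℚ) ≤ (m:ℚ) →
      1 / C2 (m+1+1) + C2 m / C2 (m+1+1) * (1 / (m : ℚ)) = 1 / ((m:ℚ)+2) := by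
    intro m hmq
    have h0' : (m:ℚ) ≠ 0 := by linarith
    have h1 : (m:ℚ)+1 ≠ 0 := by linarith
    have h2 : (m:ℚ)+2 ≠ 0 := by linarith
    unfold C2; push_cast; field_simp; ring
  have e1 : ∀ m : ℕ, (3:ℚ) ≤ (m:ℚ) →
      C2 m / C2 (m+1) * (1 / (m : ℚ)) = ((m:ℚ)-1) / (((m:ℚ)+1)*(m:ℚ)) := by
    intro m hmq
    have h0' : (m:ℚ) ≠ 0 := by linarith
    have h1 : (m:ℚ)+1 ≠ 0 := by linarith
    unfold C2; push_cast; field_simp; ring_nf; field_simp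
  have hcoef0 : ∀ m : ℕ, (3:ℚ) ≤ (m:ℚ) → (0 : ℚ) ≤ C2 m / C2 (m+1+1) := by
    intro m hmq
    apply div_nonneg
    · unfold C2; push_cast; nlinarith
    · unfold C2; push_cast; nlinarith
  have hcoef1 : ∀ m : ℕ, (3:ℚ) ≤ (m:ℚ) → (0 : ℚ) ≤ C2 m / C2 (m+1) := by
    intro m hmq
    apply div_nonneg
    · unfold C2; push_cast; nlinarith
    · unfold C2; push_cast; nlinarith
  -- Auxiliary: for all k ≥ 3 and ℓ < k, p_xy k ℓ ≤ 1/k.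
  have aux : ∀ k, 3 ≤ k → ∀ ℓ, ℓ < k → p_xy k ℓ ≤ 1 / (k : ℚ) := by
    intro k hk
    induction k, hk using Nat.le_induction with
    | base =>
      intro ℓ hℓ
      rw [(h3 ℓ (by omega)).1]
      norm_num
    | succ m hm IH =>
      intro ℓ hℓ
      have hmq : (3 : ℚ) ≤ (m : ℚ) := by exact_mod_cast hm
      cases ℓ with
      | zero =>
        have h := (h0 (m+1) (by omega)).1
        simp only [Nat.add_sub_cancel] at h
        rw [h]
        have hP : p_xy m 0 ≤ 1 / (m : ℚ) := IH 0 (by omega)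
        have h2 := mul_le_mul_of_nonneg_left hP (hcoef0 m hmq)
        have key : (1 : ℚ) / ((m:ℚ)+2) ≤ 1 / ((m:ℚ)+1) := by
          rw [div_le_div_iff₀ (by linarith) (by linarith)]; linarith
        push_cast
        rw [show ((m:ℚ)+1) = (m:ℚ)+1 from rfl]
        calc 1 / C2 (m+1+1) + C2 m / C2 (m+1+1) * p_xy m 0
            ≤ 1 / C2 (m+1+1) + C2 m / C2 (m+1+1) * (1 / (m : ℚ)) := by linarith
          _ = 1 / ((m:ℚ)+2) := e0 m hmq
          _ ≤ 1 / ((m:ℚ)+1) := key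
      | succ n =>
        have h := hxy (m+1) (n+1) (by omega) (by omega) (by omega)
        simp only [Nat.add_sub_cancel] at h
        rw [h]
        have hP : p_xy m n ≤ 1 / (m : ℚ) := IH n (by omega)
        have h2 := mul_le_mul_of_nonneg_left hP (hcoef1 m hmq)
        push_cast
        calc C2 m / C2 (m+1) * p_xy m n
            ≤ C2 m / C2 (m+1) * (1 / (m : ℚ)) := by linarith
          _ = ((m:ℚ)-1) / (((m:ℚ)+1)*(m:ℚ)) := e1 m hmq
          _ ≤ 1 / ((m:ℚ)+1) := by
              rw [div_le_div_iff₀ (by nlinarith) (by linarith)]; nlinarith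
  -- Main statement.
  intro k ℓ hk hℓ
  obtain ⟨m, rfl⟩ : ∃ m, k = m + 1 := ⟨k - 1, by omega⟩
  have hm : 3 ≤ m := by omega
  have hmq : (3 : ℚ) ≤ (m : ℚ) := by exact_mod_cast hm
  cases ℓ with
  | zero =>
    have h := (h0 (m+1) (by omega)).1
    simp only [Nat.add_sub_cancel] at h
    rw [h]
    have hP : p_xy m 0 ≤ 1 / (m : ℚ) := aux m hm 0 (by omega)
    have h2 := mul_le_mul_of_nonneg_left hP (hcoef0 m hmq)
    push_cast
    calc 1 / C2 (m+1+1) + C2 m / C2 (m+1+1) * p_xy m 0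
        ≤ 1 / C2 (m+1+1) + C2 m / C2 (m+1+1) * (1 / (m : ℚ)) := by linarith
      _ = 1 / ((m:ℚ)+2) := e0 m hmq
      _ < 1 / ((m:ℚ)+1) := by
          rw [div_lt_div_iff₀ (by linarith) (by linarith)]; linarith
  | succ n =>
    have h := hxy (m+1) (n+1) (by omega) (by omega) (by omega)
    simp only [Nat.add_sub_cancel] at h
    rw [h]
    have hP : p_xy m n ≤ 1 / (m : ℚ) := aux m hm n (by omega)
    have h2 := mul_le_mul_of_nonneg_left hP (hcoef1 m hmq)
    push_cast
    calc C2 m / C2 (m+1) * p_xy m n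
        ≤ C2 m / C2 (m+1) * (1 / (m : ℚ)) := by linarith
      _ = ((m:ℚ)-1) / (((m:ℚ)+1)*(m:ℚ)) := e1 m hmq
      _ < 1 / ((m:ℚ)+1) := by
          rw [div_lt_div_iff₀ (by nlinarith) (by linarith)]; nlinarith
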